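/- Two k-sets A, B ⊆ [n] (with 2k ≤ n) are strongly intersecting if and only if there exist indices 1 ≤ i, j ≤ k such that i + j > max{a_i, b_j}, where A = {a_1 < ... < a_k}, B = {b_1 < ... < b_k}. -/

import Mathlib

open Finset

/-- 1-indexed i-th smallest element of a finset of naturals (0 if out of range). -/
def nth (A : Finset ℕ) (i : ℕ) : ℕ := (A.sort (· ≤ ·)).getD (i - 1) 0

/-- Elementwise order on finsets of equal size: `A ≤ B`. -/
def eLE (A B : Finset ℕ) : Prop :=
  A.card = B.card ∧ ∀ i, 1 ≤ i → i ≤ B.card → nth A i ≤ nth B i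

/-- `A ⪯ B`: `|A| ≥ |B|` and the i-th smallest of `A` is ≤ the i-th smallest of `B` for `i ≤ |B|`. -/
def preceq (A B : Finset ℕ) : Prop :=
  B.card ≤ A.card ∧ ∀ i, 1 ≤ i → i ≤ B.card → nth A i ≤ nth B i

/-- `μ_X(l) = |X ∩ [l]|`. -/
def mu (X : Finset ℕ) (l : ℕ) : ℕ := (X ∩ Finset.Icc 1 l).card

/-- `G ∼_si H` (within `[n]`): every `G' ≤ G` and `H' ≤ H` with `G', H' ⊆ [n]` intersect. -/
def sInt (n : ℕ) (G H : Finset ℕ) : Prop :=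
  ∀ G' H' : Finset ℕ, G' ⊆ Finset.Icc 1 n → H' ⊆ Finset.Icc 1 n →
    eLE G' G → eLE H' H → (G' ∩ H').Nonempty

/-- `F(n,k,𝒢)`: the k-subsets `S` of `[n]` with `S ⪯ G` for some `G ∈ 𝒢`. -/
def Fam (n k : ℕ) (𝒢 : Set (Finset ℕ)) : Set (Finset ℕ) :=
  {S | S ⊆ Finset.Icc 1 n ∧ S.card = k ∧ ∃ G ∈ 𝒢, preceq S G}

/-- A family is intersecting if every two members (possibly equal) intersect. -/
def IsIntersecting (𝒜 : Set (Finset ℕ)) : Prop :=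
  ∀ A ∈ 𝒜, ∀ B ∈ 𝒜, (A ∩ B).Nonempty

/-- The type of `G`: the largest `r` with `g_r < k + r`. -/
def typeOf (k : ℕ) (G : Finset ℕ) : ℕ :=
  ((Finset.range (G.card + 1)).filter fun r => 1 ≤ r ∧ nth G r < k + r).sup id

/-- `π(G) = {g_1, …, g_r}` where `r` is the type of `G`. -/
def piG (k : ℕ) (G : Finset ℕ) : Finset ℕ :=
  ((G.sort (· ≤ ·)).take (typeOf k G)).toFinset

lemma nth_eq_get (A : Finset ℕ) {i : ℕ} (h2 : i ≤ A.card) (h1 : 1 ≤ i) :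
    nth A i = (A.sort (· ≤ ·)).get ⟨i-1, by rw [Finset.length_sort]; omega⟩ := by
  rw [nth, List.getD_eq_getElem _ _ (by rw [Finset.length_sort]; omega)]
  simp

lemma nth_mem {A : Finset ℕ} {i : ℕ} (h1 : 1 ≤ i) (h2 : i ≤ A.card) : nth A i ∈ A := by
  rw [nth_eq_get A h2 h1]
  rw [← Finset.mem_sort (· ≤ ·)]
  exact List.get_mem _ _

lemma nth_mono {A : Finset ℕ} {i j : ℕ} (h1 : 1 ≤ i) (hij : i ≤ j) (hj : j ≤ A.card) :
    nth A i ≤ nth A j := by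
  rw [nth_eq_get A (le_trans hij hj) h1, nth_eq_get A hj (le_trans h1 hij)]
  exact (Finset.pairwise_sort A (· ≤ ·)).rel_get_of_le (by simp [Fin.le_def]; omega)

lemma nth_strictMono {A : Finset ℕ} {i j : ℕ} (h1 : 1 ≤ i) (hij : i < j) (hj : j ≤ A.card) :
    nth A i < nth A j := by
  rw [nth_eq_get A (by omega) h1, nth_eq_get A hj (by omega)]
  exact (Finset.sortedLT_sort A).pairwise.rel_get_of_lt (by simp [Fin.lt_def]; omega)


lemma mu_le_card (X : Finset ℕ) (l : ℕ) : mu X l ≤ X.card :=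
  Finset.card_le_card Finset.inter_subset_left

lemma mu_le (X : Finset ℕ) (l : ℕ) : mu X l ≤ l := by
  have : mu X l ≤ (Finset.Icc 1 l).card := Finset.card_le_card Finset.inter_subset_right
  rw [Nat.card_Icc] at this
  omega

lemma mu_mono (X : Finset ℕ) {l l' : ℕ} (h : l ≤ l') : mu X l ≤ mu X l' :=
  Finset.card_le_card (Finset.inter_subset_inter le_rfl (Finset.Icc_subset_Icc_right h))

lemma le_mu {n : ℕ} {A : Finset ℕ} (hA : A ⊆ Finset.Icc 1 n) {i l : ℕ}
    (h1 : 1 ≤ i) (h2 : i ≤ A.card) (h : nth A i ≤ l) : i ≤ mu A l := by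
  have hlen : (A.sort (· ≤ ·)).length = A.card := Finset.length_sort _
  have hsub : ((A.sort (· ≤ ·)).take i).toFinset ⊆ A ∩ Finset.Icc 1 l := by
    intro x hx
    rw [List.mem_toFinset] at hx
    have hxA : x ∈ A := by
      rw [← Finset.mem_sort (· ≤ ·)]
      exact List.mem_of_mem_take hx
    obtain ⟨t, ht, hget⟩ := List.mem_iff_getElem.1 hx
    rw [List.length_take] at ht
    have ht' : t < (A.sort (· ≤ ·)).length := by omega
    have hxle : x ≤ nth A i := by
      rw [nth_eq_get A h2 h1, ← hget, List.getElem_take]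
      have := (Finset.pairwise_sort A (· ≤ ·)).rel_get_of_le
        (a := ⟨t, ht'⟩) (b := ⟨i-1, by omega⟩)
        (by rw [Fin.le_def]; simp; omega)
      simpa using this
    have hx1 : 1 ≤ x := (Finset.mem_Icc.1 (hA hxA)).1
    exact Finset.mem_inter.2 ⟨hxA, Finset.mem_Icc.2 ⟨hx1, le_trans hxle h⟩⟩
  have hcard : ((A.sort (· ≤ ·)).take i).toFinset.card = i := by
    rw [List.toFinset_card_of_nodup ((List.take_sublist _ _).nodup (Finset.sort_nodup _ _)),
      List.length_take]
    omega
  calc i = ((A.sort (· ≤ ·)).take i).toFinset.card := hcard.symm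
  _ ≤ mu A l := Finset.card_le_card hsub

lemma nth_le_of_mu {A : Finset ℕ} {i l : ℕ} (h1 : 1 ≤ i) (h2 : i ≤ mu A l) :
    nth A i ≤ l := by
  by_contra hcon
  push_neg at hcon
  have hlen : (A.sort (· ≤ ·)).length = A.card := Finset.length_sort _
  have hic : i ≤ A.card := le_trans h2 (mu_le_card A l)
  have hsub : A ∩ Finset.Icc 1 l ⊆ ((A.sort (· ≤ ·)).take (i-1)).toFinset := by
    intro x hx
    rw [Finset.mem_inter, Finset.mem_Icc] at hx
    have hxs : x ∈ A.sort (· ≤ ·) := (Finset.mem_sort (· ≤ ·)).2 hx.1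
    obtain ⟨t, ht, hget⟩ := List.mem_iff_getElem.1 hxs
    have htlt : t < i - 1 := by
      by_contra hge
      push_neg at hge
      have hle : nth A i ≤ x := by
        rw [nth_eq_get A hic h1, ← hget]
        have := (Finset.pairwise_sort A (· ≤ ·)).rel_get_of_le
          (a := ⟨i-1, by omega⟩) (b := ⟨t, ht⟩) (by rw [Fin.le_def]; simpa using hge)
        simpa using this
      have := hx.2.2
      omega
    rw [List.mem_toFinset]
    exact List.mem_iff_getElem.2 ⟨t, by rw [List.length_take]; omega, by
      rw [List.getElem_take]; exact hget⟩
  have : mu A l ≤ i - 1 := by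
    calc mu A l ≤ ((A.sort (· ≤ ·)).take (i-1)).toFinset.card := Finset.card_le_card hsub
    _ ≤ ((A.sort (· ≤ ·)).take (i-1)).length := List.toFinset_card_le _
    _ ≤ i - 1 := by rw [List.length_take]; omega
  omega

lemma nth_pos {n : ℕ} {A : Finset ℕ} (hA : A ⊆ Finset.Icc 1 n) {i : ℕ}
    (h1 : 1 ≤ i) (h2 : i ≤ A.card) : 1 ≤ nth A i :=
  (Finset.mem_Icc.1 (hA (nth_mem h1 h2))).1

lemma nth_le_n {n : ℕ} {A : Finset ℕ} (hA : A ⊆ Finset.Icc 1 n) {i : ℕ}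
    (h1 : 1 ≤ i) (h2 : i ≤ A.card) : nth A i ≤ n :=
  (Finset.mem_Icc.1 (hA (nth_mem h1 h2))).2

theorem stmt16 (n k : ℕ) (hn : 2 * k ≤ n) (A B : Finset ℕ)
    (hA : A ⊆ Finset.Icc 1 n) (hB : B ⊆ Finset.Icc 1 n)
    (hAc : A.card = k) (hBc : B.card = k) :
    sInt n A B ↔ ∃ i j, 1 ≤ i ∧ i ≤ k ∧ 1 ≤ j ∧ j ≤ k ∧
      max (nth A i) (nth B j) < i + j := by
  constructor
  · intro hsi
    by_contra hno
    push_neg at hno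
    have H : ∀ l, mu A l + mu B l ≤ l := by
      intro l
      by_contra hl
      push_neg at hl
      have hiA : mu A l ≤ k := hAc ▸ mu_le_card A l
      have hjB : mu B l ≤ k := hBc ▸ mu_le_card B l
      have hil : mu A l ≤ l := mu_le A l
      have hjl : mu B l ≤ l := mu_le B l
      have hi1 : 1 ≤ mu A l := by omega
      have hj1 : 1 ≤ mu B l := by omega
      have h1 : nth A (mu A l) ≤ l := nth_le_of_mu hi1 le_rfl
      have h2 : nth B (mu B l) ≤ l := nth_le_of_mu hj1 le_rfl
      have := hno (mu A l) (mu B l) hi1 hiA hj1 hjB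
      rw [le_max_iff] at this
      omega
    -- the construction
    set f : ℕ → ℕ := fun i => i + mu B (nth A i - 1) with hf
    set g : ℕ → ℕ := fun j => j + mu A (nth B j) with hg
    have fmono : ∀ i i', 1 ≤ i → i < i' → i' ≤ k → f i < f i' := by
      intro i i' h1 h2 h3
      have := nth_strictMono (A := A) h1 h2 (hAc ▸ h3)
      have := mu_mono B (l := nth A i - 1) (l' := nth A i' - 1) (by omega)
      simp only [hf]
      omega
    have gmono : ∀ j j', 1 ≤ j → j < j' → j' ≤ k → g j < g j' := by
      intro j j' h1 h2 h3
      have := nth_strictMono (A := B) h1 h2 (hBc ▸ h3)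
      have := mu_mono A (l := nth B j) (l' := nth B j') (by omega)
      simp only [hg]
      omega
    have finj : Set.InjOn f (Finset.Icc 1 k) := by
      intro a ha b hb hab
      rw [Finset.coe_Icc, Set.mem_Icc] at ha hb
      rcases lt_trichotomy a b with h | h | h
      · exact absurd hab (by have := fmono a b ha.1 h hb.2; omega)
      · exact h
      · exact absurd hab (by have := fmono b a hb.1 h ha.2; omega)
    have ginj : Set.InjOn g (Finset.Icc 1 k) := by
      intro a ha b hb hab
      rw [Finset.coe_Icc, Set.mem_Icc] at ha hb
      rcases lt_trichotomy a b with h | h | h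
      · exact absurd hab (by have := gmono a b ha.1 h hb.2; omega)
      · exact h
      · exact absurd hab (by have := gmono b a hb.1 h ha.2; omega)
    set A' := (Finset.Icc 1 k).image f with hA'
    set B' := (Finset.Icc 1 k).image g with hB'
    have hA'c : A'.card = k := by
      rw [hA', Finset.card_image_of_injOn finj, Nat.card_Icc]; omega
    have hB'c : B'.card = k := by
      rw [hB', Finset.card_image_of_injOn ginj, Nat.card_Icc]; omega
    have hfle : ∀ i, 1 ≤ i → i ≤ k → f i ≤ nth A i := by
      intro i h1 h2
      have hmu : i ≤ mu A (nth A i) := le_mu hA h1 (hAc ▸ h2) le_rfl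
      have hm : mu B (nth A i - 1) ≤ mu B (nth A i) := mu_mono B (by omega)
      have := H (nth A i)
      simp only [hf]
      omega
    have hgle : ∀ j, 1 ≤ j → j ≤ k → g j ≤ nth B j := by
      intro j h1 h2
      have hmu : j ≤ mu B (nth B j) := le_mu hB h1 (hBc ▸ h2) le_rfl
      have := H (nth B j)
      simp only [hg]
      omega
    have hA'sub : A' ⊆ Finset.Icc 1 n := by
      intro x hx
      rw [hA', Finset.mem_image] at hx
      obtain ⟨i, hi, rfl⟩ := hx
      rw [Finset.mem_Icc] at hi
      have h1 := hfle i hi.1 hi.2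
      have h2 := nth_le_n hA hi.1 (hAc ▸ hi.2)
      rw [Finset.mem_Icc]
      constructor
      · simp only [hf]; omega
      · omega
    have hB'sub : B' ⊆ Finset.Icc 1 n := by
      intro x hx
      rw [hB', Finset.mem_image] at hx
      obtain ⟨j, hj, rfl⟩ := hx
      rw [Finset.mem_Icc] at hj
      have h1 := hgle j hj.1 hj.2
      have h2 := nth_le_n hB hj.1 (hBc ▸ hj.2)
      rw [Finset.mem_Icc]
      constructor
      · simp only [hg]; omega
      · omega
    -- nth A' i ≤ f i
    have hnthA' : ∀ i, 1 ≤ i → i ≤ k → nth A' i ≤ f i := by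
      intro i h1 h2
      apply nth_le_of_mu h1
      have hsub : (Finset.Icc 1 i).image f ⊆ A' ∩ Finset.Icc 1 (f i) := by
        intro x hx
        rw [Finset.mem_image] at hx
        obtain ⟨t, ht, rfl⟩ := hx
        rw [Finset.mem_Icc] at ht
        refine Finset.mem_inter.2 ⟨?_, Finset.mem_Icc.2 ⟨by simp only [hf]; omega, ?_⟩⟩
        · exact Finset.mem_image.2 ⟨t, Finset.mem_Icc.2 ⟨ht.1, le_trans ht.2 h2⟩, rfl⟩
        · rcases eq_or_lt_of_le ht.2 with h | h
          · rw [h]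
          · exact le_of_lt (fmono t i ht.1 h h2)
      have hcard : ((Finset.Icc 1 i).image f).card = i := by
        rw [Finset.card_image_of_injOn (finj.mono (by
          rw [Finset.coe_Icc, Finset.coe_Icc]
          exact Set.Icc_subset_Icc le_rfl h2)), Nat.card_Icc]; omega
      calc i = ((Finset.Icc 1 i).image f).card := hcard.symm
      _ ≤ mu A' (f i) := Finset.card_le_card hsub
    have hnthB' : ∀ j, 1 ≤ j → j ≤ k → nth B' j ≤ g j := by
      intro j h1 h2
      apply nth_le_of_mu h1
      have hsub : (Finset.Icc 1 j).image g ⊆ B' ∩ Finset.Icc 1 (g j) := by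
        intro x hx
        rw [Finset.mem_image] at hx
        obtain ⟨t, ht, rfl⟩ := hx
        rw [Finset.mem_Icc] at ht
        refine Finset.mem_inter.2 ⟨?_, Finset.mem_Icc.2 ⟨by simp only [hg]; omega, ?_⟩⟩
        · exact Finset.mem_image.2 ⟨t, Finset.mem_Icc.2 ⟨ht.1, le_trans ht.2 h2⟩, rfl⟩
        · rcases eq_or_lt_of_le ht.2 with h | h
          · rw [h]
          · exact le_of_lt (gmono t j ht.1 h h2)
      have hcard : ((Finset.Icc 1 j).image g).card = j := by
        rw [Finset.card_image_of_injOn (ginj.mono (by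
          rw [Finset.coe_Icc, Finset.coe_Icc]
          exact Set.Icc_subset_Icc le_rfl h2)), Nat.card_Icc]; omega
      calc j = ((Finset.Icc 1 j).image g).card := hcard.symm
      _ ≤ mu B' (g j) := Finset.card_le_card hsub
    have hA'le : eLE A' A := by
      refine ⟨by omega, fun i h1 h2 => ?_⟩
      exact le_trans (hnthA' i h1 (hAc ▸ h2)) (hfle i h1 (hAc ▸ h2))
    have hB'le : eLE B' B := by
      refine ⟨by omega, fun j h1 h2 => ?_⟩
      exact le_trans (hnthB' j h1 (hBc ▸ h2)) (hgle j h1 (hBc ▸ h2))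
    -- disjointness
    have hdisj : A' ∩ B' = ∅ := by
      rw [Finset.eq_empty_iff_forall_notMem]
      intro x hx
      rw [Finset.mem_inter] at hx
      obtain ⟨i, hi, hfi⟩ := Finset.mem_image.1 (hA' ▸ hx.1)
      obtain ⟨j, hj, hgj⟩ := Finset.mem_image.1 (hB' ▸ hx.2)
      rw [Finset.mem_Icc] at hi hj
      have heq : f i = g j := by rw [hfi, hgj]
      have hai1 : 1 ≤ nth A i := nth_pos hA hi.1 (hAc ▸ hi.2)
      rcases le_or_gt (nth A i) (nth B j) with hcase | hcase
      · have hmuA : i ≤ mu A (nth B j) := le_mu hA hi.1 (hAc ▸ hi.2) hcase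
        have hmuB : mu B (nth A i - 1) ≤ j - 1 := by
          by_contra hc
          push_neg at hc
          have hj' : j ≤ mu B (nth A i - 1) := by omega
          have := nth_le_of_mu hj.1 hj'
          omega
        simp only [hf, hg] at heq
        omega
      · have hmuB : j ≤ mu B (nth A i - 1) :=
          le_mu hB hj.1 (hBc ▸ hj.2) (by omega)
        have hmuA : mu A (nth B j) ≤ i - 1 := by
          by_contra hc
          push_neg at hc
          have hi' : i ≤ mu A (nth B j) := by omega
          have := nth_le_of_mu hi.1 hi'
          omega
        simp only [hf, hg] at heq
        omega
    have := hsi A' B' hA'sub hB'sub hA'le hB'le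
    rw [hdisj] at this
    exact Finset.not_nonempty_empty this
  · rintro ⟨i, j, hi1, hik, hj1, hjk, hmax⟩
    intro A' B' hA'sub hB'sub hA'le hB'le
    rw [max_lt_iff] at hmax
    set l := i + j - 1 with hl
    have hA'c : A'.card = k := hA'le.1.trans hAc
    have hB'c : B'.card = k := hB'le.1.trans hBc
    have h1 : nth A' i ≤ l := by
      have := hA'le.2 i hi1 (hAc ▸ hik)
      omega
    have h2 : nth B' j ≤ l := by
      have := hB'le.2 j hj1 (hBc ▸ hjk)
      omega
    have hmuA : i ≤ mu A' l := le_mu hA'sub hi1 (hA'c ▸ hik) h1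
    have hmuB : j ≤ mu B' l := le_mu hB'sub hj1 (hB'c ▸ hjk) h2
    have hunion : ((A' ∩ Finset.Icc 1 l) ∪ (B' ∩ Finset.Icc 1 l)).card ≤ l := by
      have : (A' ∩ Finset.Icc 1 l) ∪ (B' ∩ Finset.Icc 1 l) ⊆ Finset.Icc 1 l :=
        Finset.union_subset Finset.inter_subset_right Finset.inter_subset_right
      have := Finset.card_le_card this
      rw [Nat.card_Icc] at this
      omega
    have hie := Finset.card_union_add_card_inter (A' ∩ Finset.Icc 1 l) (B' ∩ Finset.Icc 1 l)
    have hpos : 0 < ((A' ∩ Finset.Icc 1 l) ∩ (B' ∩ Finset.Icc 1 l)).card := by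
      simp only [mu] at hmuA hmuB
      omega
    obtain ⟨x, hx⟩ := Finset.card_pos.1 hpos
    rw [Finset.mem_inter, Finset.mem_inter, Finset.mem_inter] at hx
    exact ⟨x, Finset.mem_inter.2 ⟨hx.1.1, hx.2.1⟩⟩
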